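/- For every integer k ≥ 3, the local antimagic total chromatic number of the firecracker graph F_{2,k} satisfies 2 ≤ χ_lat(F_{2,k}) ≤ 3. -/

import Mathlib

/-!
Local antimagic (total) labelings and chromatic numbers, firecracker graphs,
stars, double stars, joins, and edge-corona products.
-/

open scoped Classical

noncomputable section

namespace LocalAntimagic

variable {V : Type*} [Fintype V]

/-- The weight of a vertex `u` under an edge labeling `f`: the sum of the
labels of the edges incident with `u`. -/
def weight (G : SimpleGraph V) (f : Sym2 V → ℕ) (u : V) : ℕ :=
  ∑ e ∈ G.edgeFinset, if u ∈ e then f e else 0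

/-- `f` is a local antimagic labeling of `G`: it maps the edge set of `G`
bijectively onto `{1, …, |E(G)|}` and adjacent vertices get distinct weights. -/
def IsLocalAntimagic (G : SimpleGraph V) (f : Sym2 V → ℕ) : Prop :=
  Set.BijOn f G.edgeSet (Set.Icc 1 G.edgeFinset.card) ∧
    ∀ u v, G.Adj u v → weight G f u ≠ weight G f v

/-- The number of distinct colors (vertex weights) induced by `f`. -/
def colorCount (G : SimpleGraph V) (f : Sym2 V → ℕ) : ℕ :=
  (Finset.univ.image (weight G f)).card

/-- The local antimagic chromatic number `χ_la(G)`: the least number of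
distinct induced colors over all local antimagic labelings of `G`. -/
def chiLA (G : SimpleGraph V) : ℕ :=
  sInf {c | ∃ f, IsLocalAntimagic G f ∧ colorCount G f = c}

/-- The total weight of a vertex `u` under a total labeling `(gv, ge)`:
`gv u` plus the sum of the labels of the edges incident with `u`. -/
def totalWeight (G : SimpleGraph V) (gv : V → ℕ) (ge : Sym2 V → ℕ) (u : V) : ℕ :=
  gv u + weight G ge u

/-- `(gv, ge)` is a local antimagic total labeling of `G`: together the vertex
labels and edge labels form a bijection from `V(G) ∪ E(G)` onto
`{1, …, |V(G)| + |E(G)|}`, and adjacent vertices get distinct total weights. -/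
def IsLocalAntimagicTotal (G : SimpleGraph V) (gv : V → ℕ) (ge : Sym2 V → ℕ) : Prop :=
  Set.BijOn (Sum.elim gv ge)
    (Set.range Sum.inl ∪ Sum.inr '' G.edgeSet)
    (Set.Icc 1 (Fintype.card V + G.edgeFinset.card)) ∧
    ∀ u v, G.Adj u v → totalWeight G gv ge u ≠ totalWeight G gv ge v

/-- The number of distinct colors (total vertex weights) induced by `(gv, ge)`. -/
def totalColorCount (G : SimpleGraph V) (gv : V → ℕ) (ge : Sym2 V → ℕ) : ℕ :=
  (Finset.univ.image (totalWeight G gv ge)).card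

/-- The local antimagic total chromatic number `χ_lat(G)`. -/
def chiLAT (G : SimpleGraph V) : ℕ :=
  sInf {c | ∃ gv ge, IsLocalAntimagicTotal G gv ge ∧ totalColorCount G gv ge = c}

/-- The firecracker graph `F_{n,k}`. `Sum.inl i` is the star center `uᵢ`
(`0 ≤ i ≤ n-1`), and `Sum.inr (i, j)` is the star leaf `v_{i,j}`; the vertices
`v_{i,0}` (i.e. `j = 0`, corresponding to `v_{i,1}` in 1-based notation) of
consecutive stars are linked into a path. -/
def firecracker (n k : ℕ) : SimpleGraph (Fin n ⊕ Fin n × Fin k) :=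
  SimpleGraph.fromRel (fun a b =>
    match a, b with
    | Sum.inl i, Sum.inr ⟨i', _⟩ => i = i'
    | Sum.inr ⟨i, j⟩, Sum.inr ⟨i', j'⟩ =>
        (j : ℕ) = 0 ∧ (j' : ℕ) = 0 ∧ (i' : ℕ) = (i : ℕ) + 1
    | _, _ => False)

namespace FC

abbrev VV (k : ℕ) := Fin 2 ⊕ Fin 2 × Fin k

variable (m : ℕ)

def φ (q : Fin 2 × Fin (m+3)) : Sym2 (VV (m+3)) := s(Sum.inl q.1, Sum.inr q)

def lk : Sym2 (VV (m+3)) := s(Sum.inr (0, 0), Sum.inr (1, 0))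

lemma edgeFinset_eq :
    (firecracker 2 (m+3)).edgeFinset =
      (Finset.univ.image (φ m)) ∪ {lk m} := by
  ext e
  induction e using Sym2.ind with
  | _ a b =>
    rw [SimpleGraph.mem_edgeFinset]
    simp only [SimpleGraph.mem_edgeFinset, SimpleGraph.mem_edgeSet, firecracker,
      SimpleGraph.fromRel_adj, Finset.mem_union, Finset.mem_image, Finset.mem_singleton,
      Finset.mem_univ, true_and, φ, lk]
    cases a <;> cases b <;>
      simp_all [Sym2.eq_iff, Prod.ext_iff, Fin.ext_iff, Fin.forall_fin_two, -Fin.val_eq_zero_iff] <;>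
      constructor <;> intro h <;> try omega
    all_goals exact ⟨_, rfl, h⟩

end FC

namespace FC
variable (m : ℕ)
local notation "k" => m+3

lemma phi_inj : Function.Injective (φ m) := by
  intro q r h
  simp only [φ, Sym2.eq_iff] at h
  rcases h with ⟨h1, h2⟩ | ⟨h1, h2⟩ <;> simp_all

lemma lk_not_mem : lk m ∉ Finset.univ.image (φ m) := by
  simp only [Finset.mem_image, not_exists, φ, lk, Finset.mem_univ, true_and]
  intro q
  simp [Sym2.eq_iff]

lemma card_edgeFinset : (firecracker 2 (m+3)).edgeFinset.card = 2*(m+3)+1 := by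
  rw [edgeFinset_eq, Finset.card_union_of_disjoint (by simp [lk_not_mem m]),
    Finset.card_image_of_injective _ (phi_inj m)]
  simp

lemma card_VV : Fintype.card (VV (m+3)) = 2*(m+3)+2 := by
  simp [VV]; ring

end FC

namespace FC
variable (m : ℕ)
local notation "kk" => m+3

/-- pendant edge label, as a function of (i, j) ∈ ℕ². -/
def pe (i j : ℕ) : ℕ :=
  if i = 0 then
    if j = 0 then (if (kk) % 2 = 1 then 1 else 2*(kk)+1) else 2*j+1 + j % 2
  else
    if j = 0 then (if (kk) % 2 = 1 then 4*(kk)+2 else 4*(kk)+3) else 2*j+2 - j % 2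

/-- leaf vertex label. -/
def lv (i j : ℕ) : ℕ :=
  if i = 0 then
    if j = 0 then (if (kk) % 2 = 1 then 2*(kk)+1 else 1) else 4*(kk)+3 - 2*j - j % 2
  else
    if j = 0 then (if (kk) % 2 = 1 then 2*(kk)+3 else 4*(kk)+2) else 4*(kk)+2 - 2*j + j % 2

def cv (i : ℕ) : ℕ :=
  if i = 0 then (if (kk) % 2 = 1 then 4*(kk)+3 else 2*(kk)+3) else 2

def gvl : VV (kk) → ℕ
  | .inl i => cv m (i : ℕ)
  | .inr (i, j) => lv m (i : ℕ) (j : ℕ)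

def gfun : VV (kk) → VV (kk) → ℕ
  | .inl _, .inr (i, j) => pe m (i : ℕ) (j : ℕ)
  | .inr (i, j), .inr (i', j') =>
      if (i:ℕ) = 0 ∧ (i':ℕ) = 1 ∧ (j:ℕ) = 0 ∧ (j':ℕ) = 0 then 2*(kk)+2 else 0
  | _, _ => 0

def gel : Sym2 (VV (kk)) → ℕ :=
  Sym2.lift ⟨fun a b => gfun m a b + gfun m b a, fun a b => add_comm _ _⟩

lemma gel_phi (q : Fin 2 × Fin (kk)) : gel m (φ m q) = pe m (q.1 : ℕ) (q.2 : ℕ) := by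
  obtain ⟨i, j⟩ := q
  simp [gel, φ, gfun, Sym2.lift_mk]

lemma gel_lk : gel m (lk m) = 2*(kk)+2 := by
  simp [gel, lk, gfun, Sym2.lift_mk]

end FC

namespace FC

lemma sum_g (n : ℕ) : ∑ j ∈ Finset.range n, (2*(j+1)+1 + (j+1) % 2) = n*n + 2*n + (n+1)/2 := by
  induction n with
  | zero => simp
  | succ n ih =>
      rw [Finset.sum_range_succ, ih]
      have : (n+1)*(n+1) = n*n + 2*n + 1 := by ring
      omega

lemma sum_h (n : ℕ) : ∑ j ∈ Finset.range n, (2*(j+1)+2 - (j+1) % 2) = n*n + 3*n - (n+1)/2 := by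
  induction n with
  | zero => simp
  | succ n ih =>
      rw [Finset.sum_range_succ, ih]
      have : (n+1)*(n+1) = n*n + 2*n + 1 := by ring
      omega

variable (m : ℕ)
local notation "kk" => m+3

lemma sum_pe0 : ∑ j : Fin (kk), pe m 0 (j:ℕ) = pe m 0 0 + ((m+2)*(m+2) + 2*(m+2) + (m+3)/2) := by
  rw [Fin.sum_univ_eq_sum_range (fun j => pe m 0 j) (kk), Finset.sum_range_succ']
  have : ∀ j ∈ Finset.range (m+2), pe m 0 (j+1) = 2*(j+1)+1 + (j+1) % 2 := by
    intro j _; simp [pe]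
  rw [Finset.sum_congr rfl this, sum_g]
  omega

lemma sum_pe1 : ∑ j : Fin (kk), pe m 1 (j:ℕ) = pe m 1 0 + ((m+2)*(m+2) + 3*(m+2) - (m+3)/2) := by
  rw [Fin.sum_univ_eq_sum_range (fun j => pe m 1 j) (kk), Finset.sum_range_succ']
  have : ∀ j ∈ Finset.range (m+2), pe m 1 (j+1) = 2*(j+1)+2 - (j+1) % 2 := by
    intro j _; simp [pe]
  rw [Finset.sum_congr rfl this, sum_h]
  omega

end FC

namespace FC
variable (m : ℕ)
local notation "kk" => m+3

lemma gel_mk (a b : VV (kk)) : gel m s(a, b) = gfun m a b + gfun m b a := rfl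

lemma sum_union_split (F : Sym2 (VV (kk)) → ℕ) :
    ∑ e ∈ (firecracker 2 (kk)).edgeFinset, F e
      = (∑ q : Fin 2 × Fin (kk), F (φ m q)) + F (lk m) := by
  rw [edgeFinset_eq, Finset.sum_union (by simp [lk_not_mem m]),
    Finset.sum_image (fun a _ b _ h => phi_inj m h), Finset.sum_singleton]

lemma weight_center (i : Fin 2) :
    weight (firecracker 2 (kk)) (gel m) (Sum.inl i) = ∑ j : Fin (kk), pe m (i:ℕ) (j:ℕ) := by
  unfold weight
  rw [sum_union_split]
  simp only [φ, lk, gel_mk, Sym2.mem_iff]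
  simp [gfun, Fintype.sum_prod_type, Finset.sum_ite_eq]

lemma weight_leaf (i : Fin 2) (j : Fin (kk)) :
    weight (firecracker 2 (kk)) (gel m) (Sum.inr (i, j))
      = pe m (i:ℕ) (j:ℕ) + (if (j:ℕ) = 0 then 2*(kk)+2 else 0) := by
  unfold weight
  rw [sum_union_split]
  simp only [φ, lk, gel_mk, Sym2.mem_iff]
  have hij : ∀ x : Fin 2 × Fin (kk),
      ((Sum.inr (i,j) : VV (kk)) = Sum.inl x.1 ∨ (Sum.inr (i,j) : VV (kk)) = Sum.inr x) ↔ (i,j) = x := by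
    simp
  simp only [hij]
  rw [Finset.sum_ite_eq (Finset.univ) ((i,j) : Fin 2 × Fin (kk))
    (fun x => gfun m (Sum.inl x.1) (Sum.inr x) + gfun m (Sum.inr x) (Sum.inl x.1))]
  have hi2 : i = 0 ∨ i = 1 := by omega
  have hlink : ((Sum.inr (i,j) : VV (kk)) = Sum.inr (0, 0) ∨ (Sum.inr (i,j) : VV (kk)) = Sum.inr (1, 0)) ↔ (j : ℕ) = 0 := by
    rcases hi2 with rfl | rfl <;> simp [Prod.ext_iff, Fin.ext_iff, -Fin.val_eq_zero_iff]
  simp only [hlink]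
  rcases hi2 with rfl | rfl <;> simp [gfun]

lemma tw_center (i : Fin 2) :
    totalWeight (firecracker 2 (kk)) (gvl m) (gel m) (Sum.inl i)
      = (kk)*(kk) + 4*(kk) + 3 + (kk)/2 := by
  have hsq : (m+3)*(m+3) = (m+2)*(m+2) + 2*(m+2) + 1 := by ring
  have hpar : (m+3) % 2 = 0 ∨ (m+3) % 2 = 1 := by omega
  have hi2 : i = 0 ∨ i = 1 := by omega
  unfold totalWeight
  rcases hi2 with rfl | rfl <;> rw [weight_center] <;>
    simp only [Fin.val_zero, Fin.val_one] <;>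
    [rw [sum_pe0]; rw [sum_pe1]] <;>
    rcases hpar with hp | hp <;>
    simp [gvl, cv, pe, hp] <;> omega

lemma tw_leaf (i : Fin 2) (j : Fin (kk)) :
    totalWeight (firecracker 2 (kk)) (gvl m) (gel m) (Sum.inr (i, j))
      = if (i:ℕ) = 1 ∧ (j:ℕ) = 0 then (if (kk) % 2 = 1 then 8*(kk)+7 else 10*(kk)+7)
        else 4*(kk)+4 := by
  have hpar : (m+3) % 2 = 0 ∨ (m+3) % 2 = 1 := by omega
  have hi2 : i = 0 ∨ i = 1 := by omega
  have hj : (j:ℕ) < m+3 := j.isLt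
  unfold totalWeight
  rw [weight_leaf]
  rcases hi2 with rfl | rfl <;>
    by_cases hj0 : (j:ℕ) = 0 <;>
    rcases hpar with hp | hp <;>
    simp [gvl, lv, pe, hp, hj0] <;> omega

lemma adj_cases {u v : VV (kk)} (h : (firecracker 2 (kk)).Adj u v) :
    (∃ i j, (u = Sum.inl i ∧ v = Sum.inr (i,j)) ∨ (v = Sum.inl i ∧ u = Sum.inr (i,j))) ∨
    ((u = Sum.inr (0,0) ∧ v = Sum.inr (1,0)) ∨ (v = Sum.inr (0,0) ∧ u = Sum.inr (1,0))) := by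
  have hmem : s(u, v) ∈ (firecracker 2 (kk)).edgeFinset := by
    rw [SimpleGraph.mem_edgeFinset, SimpleGraph.mem_edgeSet]; exact h
  rw [edgeFinset_eq] at hmem
  rcases Finset.mem_union.1 hmem with hm | hm
  · obtain ⟨q, -, hq⟩ := Finset.mem_image.1 hm
    rw [φ, Sym2.eq_iff] at hq
    left
    rcases hq with ⟨h1, h2⟩ | ⟨h1, h2⟩
    · exact ⟨q.1, q.2, Or.inl ⟨h1.symm, by simp [← h2]⟩⟩
    · exact ⟨q.1, q.2, Or.inr ⟨h1.symm, by simp [← h2]⟩⟩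
  · rw [Finset.mem_singleton, lk, Sym2.eq_iff] at hm
    right
    rcases hm with ⟨h1, h2⟩ | ⟨h1, h2⟩
    · exact Or.inl ⟨h1, h2⟩
    · exact Or.inr ⟨h2, h1⟩

lemma tw_ne (u v : VV (kk)) (h : (firecracker 2 (kk)).Adj u v) :
    totalWeight (firecracker 2 (kk)) (gvl m) (gel m) u
      ≠ totalWeight (firecracker 2 (kk)) (gvl m) (gel m) v := by
  have hsq : (m+3)*(m+3) = m*m + 6*m + 9 := by ring
  have hWA : ∀ (i : Fin 2) (jj : Fin (kk)) (i' : Fin 2),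
      totalWeight (firecracker 2 (kk)) (gvl m) (gel m) (Sum.inl i')
        ≠ totalWeight (firecracker 2 (kk)) (gvl m) (gel m) (Sum.inr (i, jj)) := by
    intro i jj i'
    rw [tw_center, tw_leaf]
    rcases Nat.lt_or_ge m 5 with h5 | h5
    · interval_cases m <;> split_ifs <;> omega
    · have h5' : 5*m ≤ m*m := Nat.mul_le_mul_right m h5
      rw [hsq]
      generalize m*m = M at h5' ⊢
      split_ifs <;> omega
  rcases adj_cases m h with ⟨i, j, ⟨rfl, rfl⟩ | ⟨rfl, rfl⟩⟩ | ⟨rfl, rfl⟩ | ⟨rfl, rfl⟩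
  · exact hWA i j i
  · exact (hWA i j i).symm
  · rw [tw_leaf, tw_leaf]; simp; split_ifs <;> omega
  · rw [tw_leaf, tw_leaf]; simp; split_ifs <;> omega

lemma mem_cases (x : VV (kk) ⊕ Sym2 (VV (kk)))
    (hx : x ∈ Set.range (Sum.inl : VV (kk) → VV (kk) ⊕ Sym2 (VV (kk)))
            ∪ Sum.inr '' (firecracker 2 (kk)).edgeSet) :
    (∃ v : VV (kk), x = Sum.inl v) ∨ (∃ q : Fin 2 × Fin (kk), x = Sum.inr (φ m q))
      ∨ x = Sum.inr (lk m) := by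
  rcases hx with ⟨v, rfl⟩ | ⟨e, he, rfl⟩
  · exact Or.inl ⟨v, rfl⟩
  · have he' : e ∈ (firecracker 2 (kk)).edgeFinset := by
      rwa [SimpleGraph.mem_edgeFinset]
    rw [edgeFinset_eq] at he'
    rcases Finset.mem_union.1 he' with hm | hm
    · obtain ⟨q, -, rfl⟩ := Finset.mem_image.1 hm
      exact Or.inr (Or.inl ⟨q, rfl⟩)
    · exact Or.inr (Or.inr (by rw [Finset.mem_singleton.1 hm]))

lemma gel_phi' (q : Fin 2 × Fin (kk)) : gel m (φ m q) = pe m (q.1 : ℕ) (q.2 : ℕ) := by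
  obtain ⟨i, j⟩ := q
  simp [gel, φ, gfun]

set_option maxHeartbeats 1000000 in
lemma lv_inj {i j i' j' : ℕ} (hi : i<2) (hi' : i'<2) (hj : j < m+3) (hj' : j' < m+3)
    (h : lv m i j = lv m i' j') : i = i' ∧ j = j' := by
  unfold lv at h
  split_ifs at h <;>
    first
      | omega
      | (rcases Nat.mod_two_eq_zero_or_one j with h5 | h5 <;>
          rcases Nat.mod_two_eq_zero_or_one j' with h6 | h6 <;> omega)

set_option maxHeartbeats 1000000 in
lemma pe_inj {i j i' j' : ℕ} (hi : i<2) (hi' : i'<2) (hj : j < m+3) (hj' : j' < m+3)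
    (h : pe m i j = pe m i' j') : i = i' ∧ j = j' := by
  unfold pe at h
  split_ifs at h <;>
    first
      | omega
      | (rcases Nat.mod_two_eq_zero_or_one j with h5 | h5 <;>
          rcases Nat.mod_two_eq_zero_or_one j' with h6 | h6 <;> omega)

set_option maxHeartbeats 1000000 in
lemma lv_ne_pe {i j i' j' : ℕ} (hi : i<2) (hi' : i'<2) (hj : j < m+3) (hj' : j' < m+3) :
    lv m i j ≠ pe m i' j' := by
  unfold lv pe
  split_ifs <;>
    first
      | omega
      | (rcases Nat.mod_two_eq_zero_or_one j with h5 | h5 <;>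
          rcases Nat.mod_two_eq_zero_or_one j' with h6 | h6 <;> omega)

set_option maxHeartbeats 1000000 in
lemma cv_ne_lv {i i' j' : ℕ} (hi : i<2) (hi' : i'<2) (hj' : j' < m+3) :
    cv m i ≠ lv m i' j' := by
  unfold cv lv
  split_ifs <;>
    first
      | omega
      | (rcases Nat.mod_two_eq_zero_or_one j' with h6 | h6 <;> omega)

set_option maxHeartbeats 1000000 in
lemma cv_ne_pe {i i' j' : ℕ} (hi : i<2) (hi' : i'<2) (hj' : j' < m+3) :
    cv m i ≠ pe m i' j' := by
  unfold cv pe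
  split_ifs <;>
    first
      | omega
      | (rcases Nat.mod_two_eq_zero_or_one j' with h6 | h6 <;> omega)

lemma cv_inj {i i' : ℕ} (hi : i<2) (hi' : i'<2) (h : cv m i = cv m i') : i = i' := by
  unfold cv at h
  split_ifs at h <;> omega

lemma cv_ne_link {i : ℕ} (hi : i<2) : cv m i ≠ 2*(m+3)+2 := by
  unfold cv; split_ifs <;> omega

set_option maxHeartbeats 400000 in
lemma lv_ne_link {i j : ℕ} (hi : i<2) (hj : j < m+3) : lv m i j ≠ 2*(m+3)+2 := by
  unfold lv
  split_ifs <;>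
    first
      | omega
      | (rcases Nat.mod_two_eq_zero_or_one j with h5 | h5 <;> omega)

set_option maxHeartbeats 400000 in
lemma pe_ne_link {i j : ℕ} (hi : i<2) (hj : j < m+3) : pe m i j ≠ 2*(m+3)+2 := by
  unfold pe
  split_ifs <;>
    first
      | omega
      | (rcases Nat.mod_two_eq_zero_or_one j with h5 | h5 <;> omega)

set_option maxHeartbeats 400000 in
lemma lv_bounds {i j : ℕ} (hi : i<2) (hj : j < m+3) : 1 ≤ lv m i j ∧ lv m i j ≤ 4*(m+3)+3 := by
  unfold lv
  split_ifs <;>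
    first
      | omega
      | (rcases Nat.mod_two_eq_zero_or_one j with h5 | h5 <;> omega)

set_option maxHeartbeats 400000 in
lemma pe_bounds {i j : ℕ} (hi : i<2) (hj : j < m+3) : 1 ≤ pe m i j ∧ pe m i j ≤ 4*(m+3)+3 := by
  unfold pe
  split_ifs <;>
    first
      | omega
      | (rcases Nat.mod_two_eq_zero_or_one j with h5 | h5 <;> omega)

lemma cv_bounds {i : ℕ} (hi : i<2) : 1 ≤ cv m i ∧ cv m i ≤ 4*(m+3)+3 := by
  unfold cv; split_ifs <;> omega

lemma f_maps : Set.MapsTo (Sum.elim (gvl m) (gel m))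
    (Set.range Sum.inl ∪ Sum.inr '' (firecracker 2 (kk)).edgeSet)
    (Set.Icc 1 (4*(m+3)+3)) := by
  intro x hx
  rcases mem_cases m x hx with ⟨v, rfl⟩ | ⟨q, rfl⟩ | rfl
  · rcases v with i | ⟨i, j⟩
    · have h := cv_bounds m (i := (i:ℕ)) i.isLt
      simp only [Sum.elim_inl, gvl, Set.mem_Icc]
      exact h
    · have h := lv_bounds m (i := (i:ℕ)) i.isLt j.isLt
      simp only [Sum.elim_inl, gvl, Set.mem_Icc]
      exact h
  · rw [Sum.elim_inr, gel_phi']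
    have h := pe_bounds m (i := (q.1:ℕ)) q.1.isLt q.2.isLt
    simp only [Set.mem_Icc]
    exact h
  · rw [Sum.elim_inr, gel_lk]
    simp only [Set.mem_Icc]; omega

lemma f_injOn : Set.InjOn (Sum.elim (gvl m) (gel m))
    (Set.range Sum.inl ∪ Sum.inr '' (firecracker 2 (kk)).edgeSet) := by
  intro x hx y hy hxy
  rcases mem_cases m x hx with ⟨v, rfl⟩ | ⟨q, rfl⟩ | rfl <;>
    rcases mem_cases m y hy with ⟨w, rfl⟩ | ⟨r, rfl⟩ | rfl
  · rcases v with i | ⟨i, j⟩ <;> rcases w with i' | ⟨i', j'⟩ <;>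
      simp only [Sum.elim_inl, gvl] at hxy
    · have := cv_inj m i.isLt i'.isLt hxy
      simp [Fin.ext_iff, this]
    · exact absurd hxy (cv_ne_lv m i.isLt i'.isLt j'.isLt)
    · exact absurd hxy.symm (cv_ne_lv m i'.isLt i.isLt j.isLt)
    · have := lv_inj m i.isLt i'.isLt j.isLt j'.isLt hxy
      simp [Prod.ext_iff, Fin.ext_iff, this.1, this.2]
  · rw [Sum.elim_inl, Sum.elim_inr, gel_phi'] at hxy
    rcases v with i | ⟨i, j⟩
    · exact absurd hxy (cv_ne_pe m i.isLt r.1.isLt r.2.isLt)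
    · exact absurd hxy (lv_ne_pe m i.isLt r.1.isLt j.isLt r.2.isLt)
  · rw [Sum.elim_inl, Sum.elim_inr, gel_lk] at hxy
    rcases v with i | ⟨i, j⟩
    · exact absurd hxy (cv_ne_link m i.isLt)
    · exact absurd hxy (lv_ne_link m i.isLt j.isLt)
  · rw [Sum.elim_inr, Sum.elim_inl, gel_phi'] at hxy
    rcases w with i | ⟨i, j⟩
    · exact absurd hxy.symm (cv_ne_pe m i.isLt q.1.isLt q.2.isLt)
    · exact absurd hxy.symm (lv_ne_pe m i.isLt q.1.isLt j.isLt q.2.isLt)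
  · rw [Sum.elim_inr, Sum.elim_inr, gel_phi', gel_phi'] at hxy
    have := pe_inj m q.1.isLt r.1.isLt q.2.isLt r.2.isLt hxy
    have hq : q = r := Prod.ext (Fin.ext this.1) (Fin.ext this.2)
    rw [hq]
  · rw [Sum.elim_inr, Sum.elim_inr, gel_phi', gel_lk] at hxy
    exact absurd hxy (pe_ne_link m q.1.isLt q.2.isLt)
  · rw [Sum.elim_inr, Sum.elim_inl, gel_lk] at hxy
    rcases w with i | ⟨i, j⟩
    · exact absurd hxy.symm (cv_ne_link m i.isLt)
    · exact absurd hxy.symm (lv_ne_link m i.isLt j.isLt)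
  · rw [Sum.elim_inr, Sum.elim_inr, gel_lk, gel_phi'] at hxy
    exact absurd hxy.symm (pe_ne_link m r.1.isLt r.2.isLt)
  · rfl

lemma f_bij : Set.BijOn (Sum.elim (gvl m) (gel m))
    (Set.range Sum.inl ∪ Sum.inr '' (firecracker 2 (kk)).edgeSet)
    (Set.Icc 1 (Fintype.card (VV (kk)) + (firecracker 2 (kk)).edgeFinset.card)) := by
  have hcard : Fintype.card (VV (kk)) + (firecracker 2 (kk)).edgeFinset.card = 4*(m+3)+3 := by
    rw [card_VV, card_edgeFinset]; ring
  rw [hcard]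
  refine ⟨f_maps m, f_injOn m, ?_⟩
  have hDco : ((Finset.univ.image Sum.inl ∪ (firecracker 2 (kk)).edgeFinset.image Sum.inr :
      Finset (VV (kk) ⊕ Sym2 (VV (kk)))) : Set (VV (kk) ⊕ Sym2 (VV (kk))))
      = Set.range Sum.inl ∪ Sum.inr '' (firecracker 2 (kk)).edgeSet := by
    ext x
    simp [Set.mem_union]
  have hcardD : (Finset.univ.image Sum.inl ∪ (firecracker 2 (kk)).edgeFinset.image Sum.inr :
      Finset (VV (kk) ⊕ Sym2 (VV (kk)))).card = 4*(m+3)+3 := by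
    rw [Finset.card_union_of_disjoint (by simp [Finset.disjoint_left])]
    rw [Finset.card_image_of_injective _ Sum.inl_injective,
      Finset.card_image_of_injective _ Sum.inr_injective,
      Finset.card_univ, card_VV, card_edgeFinset]
    ring
  have himg : (Finset.univ.image Sum.inl ∪ (firecracker 2 (kk)).edgeFinset.image Sum.inr :
      Finset (VV (kk) ⊕ Sym2 (VV (kk)))).image (Sum.elim (gvl m) (gel m))
      = Finset.Icc 1 (4*(m+3)+3) := by
    apply Finset.eq_of_subset_of_card_le
    · intro c hc
      obtain ⟨x, hxD, rfl⟩ := Finset.mem_image.1 hc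
      have hx : x ∈ Set.range Sum.inl ∪ Sum.inr '' (firecracker 2 (kk)).edgeSet := by
        rw [← hDco]; exact hxD
      have := f_maps m hx
      simpa [Finset.mem_Icc, Set.mem_Icc] using this
    · rw [Nat.card_Icc, Finset.card_image_of_injOn, hcardD]
      · omega
      · intro a ha b hb h
        exact f_injOn m (by rw [← hDco]; exact ha) (by rw [← hDco]; exact hb) h
  intro c hc
  have hc' : c ∈ Finset.Icc 1 (4*(m+3)+3) := by
    simpa [Finset.mem_Icc, Set.mem_Icc] using hc
  rw [← himg] at hc'
  obtain ⟨x, hxD, rfl⟩ := Finset.mem_image.1 hc'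
  exact ⟨x, by rw [← hDco]; exact hxD, rfl⟩

lemma is_lat : IsLocalAntimagicTotal (firecracker 2 (kk)) (gvl m) (gel m) :=
  ⟨f_bij m, fun u v h => tw_ne m u v h⟩

lemma colors_le : totalColorCount (firecracker 2 (kk)) (gvl m) (gel m) ≤ 3 := by
  unfold totalColorCount
  have hsub : Finset.univ.image (totalWeight (firecracker 2 (kk)) (gvl m) (gel m)) ⊆
      {(m+3)*(m+3) + 4*(m+3) + 3 + (m+3)/2,
        (if (m+3) % 2 = 1 then 8*(m+3)+7 else 10*(m+3)+7), 4*(m+3)+4} := by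
    intro c hc
    obtain ⟨u, -, rfl⟩ := Finset.mem_image.1 hc
    rcases u with i | ⟨i, j⟩
    · rw [tw_center]; simp
    · rw [tw_leaf]
      split_ifs <;> simp
  refine le_trans (Finset.card_le_card hsub) ?_
  refine le_trans (Finset.card_insert_le _ _) ?_
  have h2 := Finset.card_insert_le (if (m+3) % 2 = 1 then 8*(m+3)+7 else 10*(m+3)+7)
    ({4*(m+3)+4} : Finset ℕ)
  simp at h2 ⊢
  omega

lemma adj0 : (firecracker 2 (kk)).Adj (Sum.inl 0) (Sum.inr (0, 0)) := by
  rw [firecracker, SimpleGraph.fromRel_adj]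
  exact ⟨by simp, Or.inl rfl⟩
end FC

/-- For every integer `k ≥ 3`, the local antimagic total chromatic number of
the firecracker graph `F_{2,k}` satisfies `2 ≤ χ_lat(F_{2,k}) ≤ 3`. -/
theorem chiLAT_firecracker_two {k : ℕ} (hk : 3 ≤ k) :
    2 ≤ chiLAT (firecracker 2 k) ∧ chiLAT (firecracker 2 k) ≤ 3 := by
  obtain ⟨m, rfl⟩ : ∃ m, k = m + 3 := ⟨k - 3, by omega⟩
  have hmem : totalColorCount (firecracker 2 (m+3)) (FC.gvl m) (FC.gel m) ∈
      {c | ∃ gv ge, IsLocalAntimagicTotal (firecracker 2 (m+3)) gv ge ∧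
        totalColorCount (firecracker 2 (m+3)) gv ge = c} :=
    ⟨FC.gvl m, FC.gel m, FC.is_lat m, rfl⟩
  constructor
  · have hsInf := Nat.sInf_mem (Set.nonempty_of_mem hmem)
    obtain ⟨gv', ge', ⟨-, hd⟩, hc⟩ := hsInf
    have hne := hd _ _ (FC.adj0 m)
    have h2 : 1 < (Finset.univ.image
        (totalWeight (firecracker 2 (m+3)) gv' ge')).card :=
      Finset.one_lt_card.2 ⟨_, Finset.mem_image_of_mem _ (Finset.mem_univ (Sum.inl 0)),
        _, Finset.mem_image_of_mem _ (Finset.mem_univ (Sum.inr (0, 0))), hne⟩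
    have hc' : totalColorCount (firecracker 2 (m+3)) gv' ge' = chiLAT (firecracker 2 (m+3)) := hc
    rw [totalColorCount] at hc'
    omega
  · exact le_trans (Nat.sInf_le hmem) (FC.colors_le m)

end LocalAntimagic
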